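/- Assume the transshipment problem is feasible, and let p̂ be a potential on the vertices of Ĥ with (p̂_i − p̂_j)/ℓ_{ij} = 1 for every arc ij ∈ Ĥ. Let π be a directed path in G from node a to node b such that a and b both belong to V(Ĥ) and lie in the same connected component of Ĥ, every internal node of π lies outside V(Ĥ), and π has at least one arc not in Ĥ. Then the slope of π satisfies (p̂_a − p̂_b)/ℓ(π) < 1, where ℓ(π) = ∑_{e∈π} ℓ_e. -/

import Mathlib

open scoped BigOperators

section PhysarumSetup

variable {V E : Type*} [Fintype V] [Fintype E] [DecidableEq V] [DecidableEq E]

/-- Incidence (boundary) matrix of the digraph given by `tail`/`head`: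
`+1` if `i` is the tail of `e`, `-1` if `i` is the head of `e`, `0` otherwise. -/
def incMatrix (tail head : E → V) : Matrix V E ℝ :=
  Matrix.of fun i e => if tail e = i then (1 : ℝ) else if head e = i then -1 else 0

/-- The digraph has no loops. -/
def NoLoops (tail head : E → V) : Prop := ∀ e, tail e ≠ head e

/-- The digraph has no multiple arcs. -/
def NoMultiple (tail head : E → V) : Prop :=
  ∀ e f, tail e = tail f → head e = head f → e = f

/-- Adjacency in the underlying undirected graph. -/
def Adj (tail head : E → V) (i j : V) : Prop :=
  ∃ e, (tail e = i ∧ head e = j) ∨ (tail e = j ∧ head e = i)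

/-- The underlying undirected graph is connected. -/
def IsConnectedGraph (tail head : E → V) : Prop :=
  ∀ i j : V, Relation.ReflTransGen (Adj tail head) i j

/-- `φ` is a flow with source vector `b`: `Bφ = b`. -/
def IsFlow (tail head : E → V) (b : V → ℝ) (φ : E → ℝ) : Prop :=
  (incMatrix tail head).mulVec φ = b

/-- Net supply `b(S)` of a vertex set `S`. -/
def netSupply (b : V → ℝ) (S : Finset V) : ℝ := ∑ i ∈ S, b i

/-- `b*_max = max_{S ⊆ V} |b(S)|`. -/
noncomputable def bstarMax (b : V → ℝ) : ℝ :=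
  sSup {x | ∃ S : Finset V, x = |netSupply b S|}

/-- `b*_min = min { |b(S)| : S ⊆ V, b(S) ≠ 0 }`. -/
noncomputable def bstarMin (b : V → ℝ) : ℝ :=
  sInf {x | ∃ S : Finset V, netSupply b S ≠ 0 ∧ x = |netSupply b S|}

/-- The support of an arc vector. -/
def suppE (φ : E → ℝ) : Set E := {e | φ e ≠ 0}

/-- An arc set is a forest in the underlying undirected graph:
equivalently, it supports no nonzero circulation. -/
def ForestSupport (tail head : E → V) (s : Set E) : Prop :=
  ∀ γ : E → ℝ, (incMatrix tail head).mulVec γ = 0 → (∀ e, γ e ≠ 0 → e ∈ s) → γ = 0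

/-- A basic feasible solution: a positive flow whose support is a forest
in the underlying undirected graph. -/
def IsBFS (tail head : E → V) (b : V → ℝ) (f : E → ℝ) : Prop :=
  IsFlow tail head b f ∧ (∀ e, 0 ≤ f e) ∧ ForestSupport tail head (suppE f)

/-- A vector is circulation free if its support contains no directed cycle:
equivalently, it supports no nonzero nonnegative circulation. -/
def CirculationFree (tail head : E → V) (φ : E → ℝ) : Prop :=
  ∀ γ : E → ℝ, (incMatrix tail head).mulVec γ = 0 → (∀ e, 0 ≤ γ e) →
    (∀ e, γ e ≠ 0 → φ e ≠ 0) → γ = 0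

/-- The weighted graph Laplacian `L(σ) = B · diag(σ/ℓ) · Bᵀ`. -/
noncomputable def lap (tail head : E → V) (ℓ σ : E → ℝ) : Matrix V V ℝ :=
  incMatrix tail head * Matrix.diagonal (fun e => σ e / ℓ e) * (incMatrix tail head).transpose

/-- The field (slope) of a potential: `Ψ(p)_{ij} = (p_i - p_j)/ℓ_{ij}`. -/
noncomputable def field (tail head : E → V) (ℓ : E → ℝ) (p : V → ℝ) : E → ℝ :=
  fun e => (p (tail e) - p (head e)) / ℓ e

/-- The set of vertices incident to an arc set `H`. -/
def VSet (tail head : E → V) (H : Set E) : Set V :=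
  {i | ∃ e ∈ H, tail e = i ∨ head e = i}

/-- Undirected reachability using only arcs in `H`. -/
def UReach (tail head : E → V) (H : Set E) : V → V → Prop :=
  Relation.ReflTransGen
    (fun i j => ∃ e ∈ H, (tail e = i ∧ head e = j) ∨ (tail e = j ∧ head e = i))

/-- `WalkLen tail head ℓ H i j L`: there is a walk in the underlying undirected
graph of `H` from `i` to `j` of total `ℓ`-length `L`. -/
inductive WalkLen (tail head : E → V) (ℓ : E → ℝ) (H : Set E) : V → V → ℝ → Prop
  | refl (i : V) : WalkLen tail head ℓ H i i 0
  | step {j k : V} {L : ℝ} (i : V) (e : E) (he : e ∈ H)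
      (hik : (tail e = i ∧ head e = j) ∨ (tail e = j ∧ head e = i))
      (hw : WalkLen tail head ℓ H j k L) : WalkLen tail head ℓ H i k (ℓ e + L)

/-- The minimal `ℓ`-length of a connecting walk within `H`. -/
noncomputable def wdist (tail head : E → V) (ℓ : E → ℝ) (H : Set E) (i j : V) : ℝ :=
  sInf {L | WalkLen tail head ℓ H i j L}

/-- The `ℓ`-diameter of `H`: the maximum of `wdist` over pairs of vertices lying in
a common component of `H`. -/
noncomputable def wdiam (tail head : E → V) (ℓ : E → ℝ) (H : Set E) : ℝ :=
  sSup {x | ∃ i j : V, (∃ L, WalkLen tail head ℓ H i j L) ∧ x = wdist tail head ℓ H i j}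

/-- Maximum norm of `p` restricted to a vertex set `A`. -/
noncomputable def supNormOn (A : Set V) (p : V → ℝ) : ℝ := sSup {x | ∃ i ∈ A, x = |p i|}

/-- Maximum norm of an arc vector. -/
noncomputable def eSupNorm (x : E → ℝ) : ℝ := sSup {r | ∃ e : E, r = |x e|}

/-- `min { σ_e : σ_e > 0 }`. -/
noncomputable def minPos (σ : E → ℝ) : ℝ := sInf {x | ∃ e, 0 < σ e ∧ x = σ e}

/-- `min_e ℓ_e`. -/
noncomputable def minLen (ℓ : E → ℝ) : ℝ := sInf {x | ∃ e : E, x = ℓ e}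

/-- The cost `ℓᵀφ` of a flow. -/
def cost (ℓ φ : E → ℝ) : ℝ := ∑ e, ℓ e * φ e

/-- The transshipment problem is feasible: there is a positive flow. -/
def Feasible (tail head : E → V) (b : V → ℝ) : Prop :=
  ∃ φ : E → ℝ, IsFlow tail head b φ ∧ ∀ e, 0 ≤ φ e

/-- `φ` is a minimum-cost positive flow. -/
def IsOptimal (tail head : E → V) (ℓ : E → ℝ) (b : V → ℝ) (φ : E → ℝ) : Prop :=
  IsFlow tail head b φ ∧ (∀ e, 0 ≤ φ e) ∧
    ∀ ψ : E → ℝ, IsFlow tail head b ψ → (∀ e, 0 ≤ ψ e) → cost ℓ φ ≤ cost ℓ ψ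

/-- `Ĥ`: the set of arcs carried by some minimum-cost positive flow. -/
def optSupport (tail head : E → V) (ℓ : E → ℝ) (b : V → ℝ) : Set E :=
  {e | ∃ φ : E → ℝ, IsOptimal tail head ℓ b φ ∧ 0 < φ e}

/-- The current `φ(t) = σ(t)·Ψ(p(t))` of the Physarum solver. -/
noncomputable def current (tail head : E → V) (ℓ : E → ℝ) (σ : ℝ → E → ℝ)
    (p : ℝ → V → ℝ) (t : ℝ) : E → ℝ :=
  fun e => σ t e * field tail head ℓ (p t) e

/-- The Physarum dynamics: `σ(t) > 0` and continuously differentiable on `[0,∞)`,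
`L(σ(t)) p(t) = b`, and `σ' = φ - σ` where `φ(t) = σ(t)·Ψ(p(t))`. -/
structure PhysarumDynamics (tail head : E → V) (ℓ : E → ℝ) (b : V → ℝ)
    (σ : ℝ → E → ℝ) (p : ℝ → V → ℝ) : Prop where
  pos : ∀ t : ℝ, 0 ≤ t → ∀ e, 0 < σ t e
  kirchhoff : ∀ t : ℝ, 0 ≤ t → (lap tail head ℓ (σ t)).mulVec (p t) = b
  contp : ContinuousOn (fun t => p t) (Set.Ici (0 : ℝ))
  dyn : ∀ t ∈ Set.Ici (0 : ℝ), ∀ e : E,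
    HasDerivWithinAt (fun s => σ s e)
      (current tail head ℓ σ p t e - σ t e) (Set.Ici (0 : ℝ)) t

/-- A directed walk from `i` to `j` using the listed arcs in order. -/
inductive DiWalk (tail head : E → V) : V → V → List E → Prop
  | nil (i : V) : DiWalk tail head i i []
  | cons {j k : V} {es : List E} (i : V) (e : E) (h1 : tail e = i) (h2 : head e = j)
      (hw : DiWalk tail head j k es) : DiWalk tail head i k (e :: es)

/-- Discrete `∞`-harmonicity of `p` at node `i` with respect to the arc set `H`:
the maximal in-slope equals the maximal out-slope, and both are nonnegative. -/
noncomputable def InfHarmAt (tail head : E → V) (ℓ : E → ℝ) (H : Set E)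
    (p : V → ℝ) (i : V) : Prop :=
  sSup {r | ∃ e ∈ H, head e = i ∧ r = (p (tail e) - p i) / ℓ e}
    = sSup {r | ∃ e ∈ H, tail e = i ∧ r = (p i - p (head e)) / ℓ e}
  ∧ 0 ≤ sSup {r | ∃ e ∈ H, tail e = i ∧ r = (p i - p (head e)) / ℓ e}

end PhysarumSetup


section Aux

variable {V E : Type*} [Fintype V] [Fintype E] [DecidableEq V] [DecidableEq E]

lemma mulVec_ind (tail head : E → V) (hloops : NoLoops tail head) (e : E) :
    (incMatrix tail head).mulVec (fun f => if f = e then (1 : ℝ) else 0)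
      = fun i => (if tail e = i then (1 : ℝ) else 0) - (if head e = i then 1 else 0) := by
  funext i
  have hne := hloops e
  simp only [Matrix.mulVec, dotProduct, mul_ite, mul_one, mul_zero,
    Finset.sum_ite_eq', Finset.mem_univ, if_true, incMatrix, Matrix.of_apply]
  by_cases h1 : tail e = i
  · by_cases h2 : head e = i
    · exact absurd (h1.trans h2.symm) hne
    · simp [h1, h2]
  · by_cases h2 : head e = i
    · simp [h1, h2]
    · simp [h1, h2]

lemma diwalk_vec (tail head : E → V) (hloops : NoLoops tail head) {u v : V} {es : List E}
    (h : DiWalk tail head u v es) :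
    (incMatrix tail head).mulVec (fun f => ((es.count f : ℕ) : ℝ))
      = fun i => (if u = i then (1 : ℝ) else 0) - (if v = i then 1 else 0) := by
  induction h with
  | nil i => funext j; simp [Matrix.mulVec, dotProduct]
  | @cons j k es' i e h1 h2 hw ih =>
    have hsplit : (fun f => (((e :: es').count f : ℕ) : ℝ))
        = (fun f => ((es'.count f : ℕ) : ℝ)) + (fun f => if f = e then (1 : ℝ) else 0) := by
      funext f
      by_cases hfe : f = e
      · subst hfe; simp [List.count_cons]
      · simp [List.count_cons, hfe, Ne.symm hfe]
    rw [hsplit, Matrix.mulVec_add, ih, mulVec_ind tail head hloops e]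
    funext m
    simp only [Pi.add_apply, h1, h2]
    ring

lemma sum_mul_count (ℓ : E → ℝ) (es : List E) :
    ∑ f, ℓ f * ((es.count f : ℕ) : ℝ) = (es.map ℓ).sum := by
  induction es with
  | nil => simp
  | cons e es ih =>
    simp only [List.count_cons, List.map_cons, List.sum_cons, beq_iff_eq]
    push_cast
    simp only [mul_add, Finset.sum_add_distrib, ih, mul_ite, mul_one, mul_zero,
      Finset.sum_ite_eq, Finset.sum_ite_eq', Finset.mem_univ, if_true]
    ring

lemma hwalk_vec (tail head : E → V) (hloops : NoLoops tail head) (ℓ : E → ℝ)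
    (hℓ : ∀ e, 0 < ℓ e) (H : Set E) (p : V → ℝ)
    (hp : ∀ e ∈ H, field tail head ℓ p e = 1) {u v : V}
    (h : UReach tail head H u v) :
    ∃ y : E → ℝ,
      (incMatrix tail head).mulVec y
          = (fun i => (if u = i then (1 : ℝ) else 0) - (if v = i then 1 else 0))
        ∧ (∀ e, y e ≠ 0 → e ∈ H) ∧ ∑ f, ℓ f * y f = p u - p v := by
  induction h with
  | refl =>
    refine ⟨0, ?_, by simp, by simp⟩
    funext i
    simp [Matrix.mulVec_zero]
  | @tail w v hw hstep ih =>
    obtain ⟨y, hy1, hy2, hy3⟩ := ih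
    obtain ⟨e, heH, hor⟩ := hstep
    have hslope : p (tail e) - p (head e) = ℓ e := by
      have := hp e heH
      rw [field, div_eq_one_iff_eq (ne_of_gt (hℓ e))] at this
      exact this
    rcases hor with ⟨ht, hh⟩ | ⟨ht, hh⟩
    · refine ⟨y + (fun f => if f = e then (1 : ℝ) else 0), ?_, ?_, ?_⟩
      · rw [Matrix.mulVec_add, hy1, mulVec_ind tail head hloops e]
        funext m
        simp only [Pi.add_apply, ht, hh]
        ring
      · intro f hf
        simp only [Pi.add_apply] at hf
        by_cases hfe : f = e
        · exact hfe ▸ heH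
        · exact hy2 f (by simpa [hfe] using hf)
      · simp only [Pi.add_apply, mul_add, Finset.sum_add_distrib, hy3, mul_ite,
          mul_one, mul_zero, Finset.sum_ite_eq', Finset.mem_univ, if_true]
        rw [ht, hh] at hslope
        linarith
    · refine ⟨y + (fun f => if f = e then (-1 : ℝ) else 0), ?_, ?_, ?_⟩
      · have hneg : (fun f => if f = e then (-1 : ℝ) else 0)
            = (-1 : ℝ) • (fun f => if f = e then (1 : ℝ) else 0) := by
          funext f; by_cases hfe : f = e <;> simp [hfe]
        rw [Matrix.mulVec_add, hy1, hneg, Matrix.mulVec_smul,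
          mulVec_ind tail head hloops e]
        funext m
        simp only [Pi.add_apply, Pi.smul_apply, ht, hh, smul_eq_mul]
        ring
      · intro f hf
        simp only [Pi.add_apply] at hf
        by_cases hfe : f = e
        · exact hfe ▸ heH
        · exact hy2 f (by simpa [hfe] using hf)
      · simp only [Pi.add_apply, mul_add, Finset.sum_add_distrib, hy3, mul_ite,
          mul_neg, mul_one, mul_zero, Finset.sum_ite_eq', Finset.mem_univ, if_true]
        rw [ht, hh] at hslope
        linarith

lemma exists_opt_pos (tail head : E → V) (ℓ : E → ℝ) (b : V → ℝ) (e1 : E)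
    (h1 : e1 ∈ optSupport tail head ℓ b) :
    ∃ φ : E → ℝ, IsOptimal tail head ℓ b φ ∧
      ∀ e ∈ optSupport tail head ℓ b, 0 < φ e := by
  classical
  have hsel : ∀ e : E, ∃ φ : E → ℝ, IsOptimal tail head ℓ b φ ∧
      (e ∈ optSupport tail head ℓ b → 0 < φ e) := by
    intro e
    by_cases h : e ∈ optSupport tail head ℓ b
    · obtain ⟨φ, hopt, hpos⟩ := h
      exact ⟨φ, hopt, fun _ => hpos⟩
    · obtain ⟨φ, hopt, _⟩ := h1
      exact ⟨φ, hopt, fun hc => absurd hc h⟩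
  choose ψ hopt hpos using hsel
  have hE : Nonempty E := ⟨e1⟩
  set n : ℝ := (Fintype.card E : ℝ) with hn
  have hn0 : 0 < n := by
    simp only [hn]
    exact_mod_cast Fintype.card_pos
  refine ⟨fun f => (∑ e, ψ e f) / n, ⟨?_, ?_, ?_⟩, ?_⟩
  · funext i
    have hb' : ∀ e : E, ∑ f, incMatrix tail head i f * ψ e f = b i := by
      intro e
      have := congrFun (hopt e).1 i
      simpa [Matrix.mulVec, dotProduct] using this
    simp only [Matrix.mulVec, dotProduct]
    calc ∑ f, incMatrix tail head i f * ((∑ e, ψ e f) / n)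
        = (∑ f, ∑ e, incMatrix tail head i f * ψ e f) / n := by
          rw [Finset.sum_div]
          exact Finset.sum_congr rfl fun f _ => by
            rw [← mul_div_assoc, Finset.mul_sum]
      _ = (∑ e : E, ∑ f, incMatrix tail head i f * ψ e f) / n := by
          rw [Finset.sum_comm]
      _ = (∑ _e : E, b i) / n := by
          rw [Finset.sum_congr rfl fun e _ => hb' e]
      _ = b i := by
          simp only [Finset.sum_const, Finset.card_univ, nsmul_eq_mul, hn]
          field_simp
  · intro f
    apply div_nonneg _ hn0.le
    exact Finset.sum_nonneg fun e _ => (hopt e).2.1 f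
  · intro χ hχ hχ0
    have hc : ∀ e : E, cost ℓ (ψ e) ≤ cost ℓ χ := fun e => (hopt e).2.2 χ hχ hχ0
    have : cost ℓ (fun f => (∑ e, ψ e f) / n) = (∑ e, cost ℓ (ψ e)) / n := by
      simp only [cost]
      calc ∑ f, ℓ f * ((∑ e, ψ e f) / n)
          = (∑ f, ∑ e, ℓ f * ψ e f) / n := by
            rw [Finset.sum_div]
            exact Finset.sum_congr rfl fun f _ => by
              rw [← mul_div_assoc, Finset.mul_sum]
        _ = (∑ e, ∑ f, ℓ f * ψ e f) / n := by rw [Finset.sum_comm]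
        _ = (∑ e, cost ℓ (ψ e)) / n := rfl
    rw [this]
    rw [div_le_iff₀ hn0]
    calc ∑ e, cost ℓ (ψ e) ≤ ∑ _e : E, cost ℓ χ := Finset.sum_le_sum fun e _ => hc e
      _ = cost ℓ χ * n := by
          simp only [Finset.sum_const, Finset.card_univ, nsmul_eq_mul, hn]
          ring
  · intro e he
    apply div_pos _ hn0
    refine Finset.sum_pos' (fun f _ => (hopt f).2.1 e) ⟨e, Finset.mem_univ e, hpos e he⟩

end Aux

theorem statement_17 {V E : Type*} [Fintype V] [Fintype E] [DecidableEq V] [DecidableEq E]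
    (tail head : E → V)
    (hloops : NoLoops tail head) (hmult : NoMultiple tail head)
    (hconn : IsConnectedGraph tail head)
    (ℓ : E → ℝ) (hℓ : ∀ e, 0 < ℓ e)
    (b : V → ℝ) (hb : ∑ i, b i = 0)
    (hfeas : Feasible tail head b)
    (phat : V → ℝ)
    (hphat : ∀ e ∈ optSupport tail head ℓ b, field tail head ℓ phat e = 1)
    (u v : V) (es : List E) (hwalk : DiWalk tail head u v es)
    (hu : u ∈ VSet tail head (optSupport tail head ℓ b))
    (hv : v ∈ VSet tail head (optSupport tail head ℓ b))
    (hcomp : UReach tail head (optSupport tail head ℓ b) u v)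
    (hint : ∀ e ∈ es.dropLast, head e ∉ VSet tail head (optSupport tail head ℓ b))
    (hnodup : (u :: es.map head).Nodup)
    (hnotin : ∃ e ∈ es, e ∉ optSupport tail head ℓ b) :
    (phat u - phat v) / (es.map ℓ).sum < 1 := by
  classical
  obtain ⟨e0, he0es, he0H⟩ := hnotin
  have hesne : es ≠ [] := by rintro rfl; simp at he0es
  have hL : 0 < (es.map ℓ).sum := by
    apply List.sum_pos
    · intro x hx
      obtain ⟨e, _, rfl⟩ := List.mem_map.mp hx
      exact hℓ e
    · simpa using hesne
  rw [div_lt_one hL]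
  by_contra hcon
  push_neg at hcon
  -- a minimum-cost flow positive on all of Ĥ
  obtain ⟨e1, he1, -⟩ := hu
  obtain ⟨phi, hopt, hposH⟩ := exists_opt_pos tail head ℓ b e1 he1
  -- the walk vector x
  set x : E → ℝ := fun f => ((es.count f : ℕ) : ℝ) with hxdef
  have hx1 := diwalk_vec tail head hloops hwalk
  have hx2 : ∑ f, ℓ f * x f = (es.map ℓ).sum := sum_mul_count ℓ es
  have hx3 : ∀ f, 0 ≤ x f := fun f => by positivity
  have hx4 : 1 ≤ x e0 := by
    have h0 : 0 < es.count e0 := by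
      rw [List.count_pos_iff]
      exact he0es
    have h1 : 1 ≤ es.count e0 := h0
    simp only [hxdef]
    exact_mod_cast h1
  -- the Ĥ-walk vector y
  obtain ⟨y, hy1, hy2, hy3⟩ :=
    hwalk_vec tail head hloops ℓ hℓ (optSupport tail head ℓ b) phat hphat hcomp
  -- choice of ε
  have hEne : Nonempty E := ⟨e0⟩
  set g : E → ℝ := fun f => if 0 < y f - x f then phi f / (y f - x f) else 1 with hgdef
  have hgpos : ∀ f, 0 < g f := by
    intro f
    simp only [hgdef]
    split_ifs with hf
    · refine div_pos ?_ hf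
      refine hposH f (hy2 f ?_)
      have := hx3 f
      intro h0
      rw [h0] at hf
      linarith
    · norm_num
  set ε : ℝ := Finset.univ.inf' Finset.univ_nonempty g with hεdef
  have hε : 0 < ε := by
    rw [hεdef, Finset.lt_inf'_iff]
    exact fun f _ => hgpos f
  have hεle : ∀ f, ε ≤ g f := fun f => Finset.inf'_le g (Finset.mem_univ f)
  -- the perturbed flow
  set φ' : E → ℝ := fun f => phi f + ε * (x f - y f) with hφ'def
  have hflow' : IsFlow tail head b φ' := by
    have hrw : φ' = phi + ε • (x - y) := by
      funext f; simp [hφ'def, mul_sub]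
    rw [IsFlow, hrw, Matrix.mulVec_add, Matrix.mulVec_smul, Matrix.mulVec_sub,
      hx1, hy1, sub_self, smul_zero, add_zero]
    exact hopt.1
  have hnn' : ∀ f, 0 ≤ φ' f := by
    intro f
    by_cases hf : 0 < y f - x f
    · have hg : g f = phi f / (y f - x f) := by
        simp only [hgdef]
        rw [if_pos hf]
      have := hεle f
      rw [hg, le_div_iff₀ hf] at this
      simp only [hφ'def]
      nlinarith
    · push_neg at hf
      have : 0 ≤ ε * (x f - y f) := mul_nonneg hε.le (by linarith)
      have := hopt.2.1 f
      simp only [hφ'def]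
      linarith
  have hcost' : cost ℓ φ' = cost ℓ phi + ε * ((es.map ℓ).sum - (phat u - phat v)) := by
    simp only [cost, hφ'def]
    calc ∑ f, ℓ f * (phi f + ε * (x f - y f))
        = ∑ f, (ℓ f * phi f + ε * (ℓ f * x f) - ε * (ℓ f * y f)) :=
          Finset.sum_congr rfl fun f _ => by ring
      _ = ∑ f, ℓ f * phi f + ε * ∑ f, ℓ f * x f - ε * ∑ f, ℓ f * y f := by
          rw [Finset.sum_sub_distrib, Finset.sum_add_distrib, Finset.mul_sum,
            Finset.mul_sum]
      _ = ∑ f, ℓ f * phi f + ε * ((es.map ℓ).sum - (phat u - phat v)) := by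
          rw [hx2, hy3]; ring
  have hcle : cost ℓ φ' ≤ cost ℓ phi := by
    rw [hcost']
    nlinarith
  have hopt' : IsOptimal tail head ℓ b φ' :=
    ⟨hflow', hnn', fun χ hχ hχ0 => le_trans hcle (hopt.2.2 χ hχ hχ0)⟩
  apply he0H
  refine ⟨φ', hopt', ?_⟩
  have hy0 : y e0 = 0 := by
    by_contra h0
    exact he0H (hy2 e0 h0)
  have := hopt.2.1 e0
  simp only [hφ'def, hy0]
  nlinarith
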